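/- arXiv:2409.07676 — 6 statements merged into one kernel-verified Lean document; each statement's English description precedes it below -/
import Mathlib

section
/- Let H be a Hermitian matrix in M_d(ℂ) and let V be a unitary matrix in U(d). Then trace(V ρ V† H) = trace(ρ H) holds for every density matrix ρ if and only if V H = H V. -/
open Matrix
open ComplexOrder

lemma quad_zero_aux {d : ℕ} (A : Matrix (Fin d) (Fin d) ℂ)
    (h : ∀ x : Fin d → ℂ, star x ⬝ᵥ A *ᵥ x = 0) : A = 0 := by
  have hT : Matrix.toEuclideanLin A = 0 := by
    rw [← inner_map_self_eq_zero]
    intro x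
    have hx := h ((WithLp.equiv 2 _) x)
    have h2 : (inner ℂ x (Matrix.toEuclideanLin A x) : ℂ) = 0 := by
      rw [Matrix.toEuclideanLin_apply, EuclideanSpace.inner_eq_star_dotProduct]
      simpa [dotProduct_comm] using hx
    rw [← inner_conj_symm, h2, map_zero]
  simpa using (map_eq_zero_iff (Matrix.toEuclideanLin) (LinearEquiv.injective _)).mp hT

lemma trace_vmv {d : ℕ} (x : Fin d → ℂ) (M : Matrix (Fin d) (Fin d) ℂ) :
    (Matrix.vecMulVec x (star x) * M).trace = star x ⬝ᵥ M *ᵥ x := by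
  simp only [Matrix.trace, Matrix.diag, Matrix.mul_apply, Matrix.vecMulVec_apply,
    dotProduct, Matrix.mulVec, Pi.star_apply, Finset.mul_sum]
  rw [Finset.sum_comm]
  refine Finset.sum_congr rfl fun j _ => Finset.sum_congr rfl fun i _ => by ring

/-- A unitary `V` preserves the mean energy `Tr{ρH}` for every density
matrix `ρ` (positive semidefinite with trace one) if and only if `V` commutes with the
Hermitian Hamiltonian `H`. -/
theorem energy_invariant_iff_commutes (d : ℕ) (H : Matrix (Fin d) (Fin d) ℂ)
    (hH : H.IsHermitian) (V : Matrix.unitaryGroup (Fin d) ℂ) :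
    (∀ ρ : Matrix (Fin d) (Fin d) ℂ, ρ.PosSemidef → ρ.trace = 1 →
        ((V : Matrix (Fin d) (Fin d) ℂ) * ρ * star (V : Matrix (Fin d) (Fin d) ℂ) * H).trace
          = (ρ * H).trace)
      ↔ (V : Matrix (Fin d) (Fin d) ℂ) * H = H * (V : Matrix (Fin d) (Fin d) ℂ) := by
  set Vm : Matrix (Fin d) (Fin d) ℂ := (V : Matrix (Fin d) (Fin d) ℂ) with hVm
  have hsV : star Vm * Vm = 1 := V.2.1
  have hVs : Vm * star Vm = 1 := V.2.2
  have hcyc : ∀ ρ : Matrix (Fin d) (Fin d) ℂ,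
      (Vm * ρ * star Vm * H).trace = (ρ * (star Vm * H * Vm)).trace := by
    intro ρ
    have h1 : Vm * ρ * star Vm * H = Vm * (ρ * (star Vm * H)) := by noncomm_ring
    rw [h1, Matrix.trace_mul_comm]
    congr 1
    noncomm_ring
  constructor
  · intro hmain
    have key : star Vm * H * Vm - H = 0 := by
      apply quad_zero_aux
      intro x
      rw [Matrix.sub_mulVec, dotProduct_sub, sub_eq_zero]
      by_cases hx : x = 0
      · simp [hx]
      · set s : ℂ := star x ⬝ᵥ x with hs
        have hs0 : s ≠ 0 := fun h0 => hx (dotProduct_star_self_eq_zero.mp h0)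
        have hsnn : 0 ≤ s := dotProduct_star_self_nonneg x
        have hsim : s.im = 0 := (Complex.nonneg_iff.mp hsnn).2.symm
        have hcnn : 0 ≤ s⁻¹ := by
          rw [Complex.nonneg_iff] at hsnn ⊢
          constructor
          · rw [Complex.inv_re]
            exact div_nonneg hsnn.1 (Complex.normSq_nonneg s)
          · rw [Complex.inv_im, hsim]
            simp
        set ρ : Matrix (Fin d) (Fin d) ℂ := s⁻¹ • Matrix.vecMulVec x (star x) with hρdef
        have hρpsd : ρ.PosSemidef := by
          refine Matrix.posSemidef_iff_dotProduct_mulVec.mpr ⟨?_, ?_⟩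
          · have hherm : (Matrix.vecMulVec x (star x)).IsHermitian := by
              ext i j
              simp [Matrix.conjTranspose_apply, Matrix.vecMulVec_apply, mul_comm]
            have hcstar : star (s⁻¹) = s⁻¹ := by
              rw [star_inv₀]
              congr 1
              exact Complex.conj_eq_iff_im.mpr hsim
            unfold Matrix.IsHermitian
            rw [hρdef, Matrix.conjTranspose_smul, hherm.eq, hcstar]
          · intro y
            have : star y ⬝ᵥ ρ *ᵥ y
                = s⁻¹ * ((star y ⬝ᵥ x) * (star x ⬝ᵥ y)) := by
              simp only [hρdef, Matrix.smul_mulVec, dotProduct_smul,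
                smul_eq_mul]
              congr 1
              simp only [dotProduct, Matrix.mulVec, Matrix.vecMulVec_apply,
                Pi.star_apply, Finset.sum_mul, Finset.mul_sum]
              rw [Finset.sum_comm]
              refine Finset.sum_congr rfl fun j _ => Finset.sum_congr rfl fun i _ => by ring
            rw [this]
            have hz : (star y ⬝ᵥ x) = star (star x ⬝ᵥ y) := by
              simp [dotProduct, Finset.sum_comm, star_sum, mul_comm]
            rw [hz]
            exact mul_nonneg hcnn (star_mul_self_nonneg _)
        have hρtr : ρ.trace = 1 := by
          have : (Matrix.vecMulVec x (star x)).trace = s := by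
            simp [Matrix.trace, Matrix.diag, Matrix.vecMulVec_apply, hs,
              dotProduct, mul_comm]
          simp [hρdef, Matrix.trace_smul, this, smul_eq_mul, inv_mul_cancel₀ hs0]
        have hmr := hmain ρ hρpsd hρtr
        rw [hcyc] at hmr
        have h1 : (ρ * (star Vm * H * Vm)).trace
            = s⁻¹ * (star x ⬝ᵥ (star Vm * H * Vm) *ᵥ x) := by
          rw [hρdef, Matrix.smul_mul, Matrix.trace_smul, trace_vmv, smul_eq_mul]
        have h2 : (ρ * H).trace = s⁻¹ * (star x ⬝ᵥ H *ᵥ x) := by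
          rw [hρdef, Matrix.smul_mul, Matrix.trace_smul, trace_vmv, smul_eq_mul]
        rw [h1, h2] at hmr
        exact mul_left_cancel₀ (inv_ne_zero hs0) hmr
    have hkey : star Vm * H * Vm = H := sub_eq_zero.mp key
    calc Vm * H = Vm * (star Vm * H * Vm) := by rw [hkey]
    _ = (Vm * star Vm) * H * Vm := by noncomm_ring
    _ = H * Vm := by rw [hVs, Matrix.one_mul]
  · intro hcomm ρ hρ htr
    rw [hcyc]
    have hc2 : star Vm * H * Vm = H := by
      have hstar : star Vm * H = H * star Vm := by
        have := congrArg star hcomm.symm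
        simpa [StarMul.star_mul, Matrix.star_eq_conjTranspose, hH.eq] using this
      rw [hstar, Matrix.mul_assoc, hsV, Matrix.mul_one]
    rw [hc2]
end

section
/- Let p ≥ 1, let n : Fin p → ℕ with n k ≥ 1 for all k, let ι := Σ k, Fin (n k), let λ : Fin p → ℝ be injective, let u be a unitary matrix in M_ι(ℂ), and set H := u · blockDiagonal'(fun k => (λ k : ℂ) • 1_{n k}) · u†. Then the subgroup { V ∈ U(ι) : V H = H V } of the unitary group of M_ι(ℂ) is isomorphic, as a group, to the direct product ∏_{k} U(n k) of the unitary groups of the blocks. -/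
open Matrix

/-- The subgroup of the unitary group consisting of the unitaries commuting with a fixed
matrix `H` (the thermodynamic group `𝒯_H`). -/
def thermodynamicGroup {ι : Type*} [Fintype ι] [DecidableEq ι] (H : Matrix ι ι ℂ) :
    Subgroup (Matrix.unitaryGroup ι ℂ) where
  carrier := {V | (V : Matrix ι ι ℂ) * H = H * (V : Matrix ι ι ℂ)}
  one_mem' := by simp
  mul_mem' := by
    intro a b ha hb
    simp only [Set.mem_setOf_eq, Submonoid.coe_mul] at *
    rw [mul_assoc, hb, ← mul_assoc, ha, mul_assoc]
  inv_mem' := by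
    intro a ha
    simp only [Set.mem_setOf_eq] at *
    have h1 : (a⁻¹ : Matrix.unitaryGroup ι ℂ) = (star (a : Matrix ι ι ℂ) : Matrix ι ι ℂ) := rfl
    rw [h1]
    calc star (a : Matrix ι ι ℂ) * H
        = star (a : Matrix ι ι ℂ) * H * ((a : Matrix ι ι ℂ) * star (a : Matrix ι ι ℂ)) := by
          rw [a.2.2, mul_one]
      _ = star (a : Matrix ι ι ℂ) * ((a : Matrix ι ι ℂ) * H) * star (a : Matrix ι ι ℂ) := by
          rw [ha]; noncomm_ring
      _ = H * star (a : Matrix ι ι ℂ) := by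
          rw [← mul_assoc, a.2.1, one_mul]

lemma conj_comm_iff {M : Type*} [Monoid M] (a b : M) (hab : a * b = 1) (hba : b * a = 1)
    (W H : M) :
    W * (a * H * b) = (a * H * b) * W ↔ (b * W * a) * H = H * (b * W * a) := by
  have cab : ∀ x : M, a * (b * x) = x := fun x => by rw [← mul_assoc, hab, one_mul]
  have cba : ∀ x : M, b * (a * x) = x := fun x => by rw [← mul_assoc, hba, one_mul]
  constructor
  · intro h
    have h2 := congrArg (fun X => b * X * a) h
    simp only [mul_assoc, cab, cba, hab, hba, mul_one] at h2 ⊢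
    exact h2
  · intro h
    have h2 := congrArg (fun X => a * X * b) h
    simp only [mul_assoc, cab, cba, hab, hba, mul_one] at h2 ⊢
    exact h2

lemma thermo_conj_eq {ι : Type*} [Fintype ι] [DecidableEq ι]
    (u : Matrix.unitaryGroup ι ℂ) (H : Matrix ι ι ℂ) :
    (thermodynamicGroup H).map (MulAut.conj u).toMonoidHom
      = thermodynamicGroup ((u : Matrix ι ι ℂ) * H * star (u : Matrix ι ι ℂ)) := by
  have hU1 : (u : Matrix ι ι ℂ) * star (u : Matrix ι ι ℂ) = 1 := u.2.2
  have hU2 : star (u : Matrix ι ι ℂ) * (u : Matrix ι ι ℂ) = 1 := u.2.1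
  have cab : ∀ x : Matrix ι ι ℂ, (u:Matrix ι ι ℂ) * (star (u:Matrix ι ι ℂ) * x) = x :=
    fun x => by rw [← mul_assoc, hU1, one_mul]
  ext W
  simp only [Subgroup.mem_map, MulEquiv.coe_toMonoidHom, MulAut.conj_apply]
  have hmem : ∀ X : Matrix.unitaryGroup ι ℂ,
      X ∈ thermodynamicGroup H ↔ (X : Matrix ι ι ℂ) * H = H * (X : Matrix ι ι ℂ) :=
    fun X => Iff.rfl
  constructor
  · rintro ⟨V, hV, rfl⟩
    rw [hmem] at hV
    show ((u * V * u⁻¹ : Matrix.unitaryGroup ι ℂ) : Matrix ι ι ℂ) * _ = _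
    have hco : ((u * V * u⁻¹ : Matrix.unitaryGroup ι ℂ) : Matrix ι ι ℂ)
        = (u : Matrix ι ι ℂ) * (V : Matrix ι ι ℂ) * star (u : Matrix ι ι ℂ) := rfl
    rw [hco, conj_comm_iff _ _ hU1 hU2]
    have : star (u:Matrix ι ι ℂ) * ((u:Matrix ι ι ℂ) * V * star (u:Matrix ι ι ℂ)) * (u:Matrix ι ι ℂ)
        = (V : Matrix ι ι ℂ) := by
      simp only [mul_assoc, hU2, mul_one]
      rw [← mul_assoc, hU2, one_mul]
    rw [this]; exact hV
  · intro hW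
    refine ⟨u⁻¹ * W * u, ?_, by group⟩
    rw [hmem]
    have hW' : (W : Matrix ι ι ℂ) * ((u : Matrix ι ι ℂ) * H * star (u : Matrix ι ι ℂ))
        = ((u : Matrix ι ι ℂ) * H * star (u : Matrix ι ι ℂ)) * (W : Matrix ι ι ℂ) := hW
    have hco : ((u⁻¹ * W * u : Matrix.unitaryGroup ι ℂ) : Matrix ι ι ℂ)
        = star (u : Matrix ι ι ℂ) * (W : Matrix ι ι ℂ) * (u : Matrix ι ι ℂ) := rfl
    rw [hco]
    exact (conj_comm_iff _ _ hU1 hU2 _ _).mp hW'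

variable {p : ℕ} {n : Fin p → ℕ}

lemma bd_eq_diag (lam : Fin p → ℝ) :
    blockDiagonal' (fun k => (lam k : ℂ) • (1 : Matrix (Fin (n k)) (Fin (n k)) ℂ))
      = diagonal (fun x : Σ k, Fin (n k) => (lam x.1 : ℂ)) := by
  simp_rw [Matrix.smul_one_eq_diagonal]
  exact blockDiagonal'_diagonal _

lemma block_zero (lam : Fin p → ℝ) (hlam : Function.Injective lam)
    (V : Matrix (Σ k, Fin (n k)) (Σ k, Fin (n k)) ℂ)
    (h : V * diagonal (fun x : Σ k, Fin (n k) => (lam x.1 : ℂ))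
       = diagonal (fun x : Σ k, Fin (n k) => (lam x.1 : ℂ)) * V) :
    ∀ x y : Σ k, Fin (n k), x.1 ≠ y.1 → V x y = 0 := by
  intro x y hxy
  have h1 := congrFun (congrFun h x) y
  rw [Matrix.mul_diagonal, Matrix.diagonal_mul] at h1
  have hne : (lam y.1 : ℂ) ≠ (lam x.1 : ℂ) := by
    simp only [ne_eq, Complex.ofReal_inj]
    exact fun hc => hxy (hlam hc).symm
  have : V x y * ((lam y.1 : ℂ) - (lam x.1 : ℂ)) = 0 := by linear_combination h1
  rcases mul_eq_zero.mp this with h' | h'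
  · exact h'
  · exact absurd (sub_eq_zero.mp h') hne

lemma eq_bd_of_block_zero (V : Matrix (Σ k, Fin (n k)) (Σ k, Fin (n k)) ℂ)
    (h0 : ∀ x y : Σ k, Fin (n k), x.1 ≠ y.1 → V x y = 0) :
    V = blockDiagonal' (fun k => Matrix.of (fun i j => V ⟨k, i⟩ ⟨k, j⟩)) := by
  ext ⟨k, i⟩ ⟨l, j⟩
  by_cases h : k = l
  · subst h
    rw [blockDiagonal'_apply_eq]
    rfl
  · rw [blockDiagonal'_apply_ne _ _ _ h]
    exact h0 _ _ h

lemma bd_comm (lam : Fin p → ℝ) (W : ∀ k, Matrix (Fin (n k)) (Fin (n k)) ℂ) :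
    blockDiagonal' W * diagonal (fun x : Σ k, Fin (n k) => (lam x.1 : ℂ))
      = diagonal (fun x : Σ k, Fin (n k) => (lam x.1 : ℂ)) * blockDiagonal' W := by
  ext x y
  rw [Matrix.mul_diagonal, Matrix.diagonal_mul]
  by_cases h : x.1 = y.1
  · rw [h]; ring
  · rw [blockDiagonal'_apply, dif_neg h]; ring

lemma star_bd (W : ∀ k, Matrix (Fin (n k)) (Fin (n k)) ℂ) :
    star (blockDiagonal' W) = blockDiagonal' (fun k => star (W k)) := by
  simp only [Matrix.star_eq_conjTranspose]
  exact Matrix.blockDiagonal'_conjTranspose W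

lemma thermo_bd_iso (lam : Fin p → ℝ) (hlam : Function.Injective lam) :
    Nonempty
      ((thermodynamicGroup
          (blockDiagonal' fun k => (lam k : ℂ) • (1 : Matrix (Fin (n k)) (Fin (n k)) ℂ)))
        ≃* (∀ k, Matrix.unitaryGroup (Fin (n k)) ℂ)) := by
  set D := blockDiagonal' fun k => (lam k : ℂ) • (1 : Matrix (Fin (n k)) (Fin (n k)) ℂ) with hDdef
  have hD : D = diagonal (fun x : Σ k, Fin (n k) => (lam x.1 : ℂ)) := bd_eq_diag lam
  have memU : ∀ (W : ∀ k, Matrix.unitaryGroup (Fin (n k)) ℂ),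
      blockDiagonal' (fun k => (W k : Matrix (Fin (n k)) (Fin (n k)) ℂ))
        ∈ Matrix.unitaryGroup (Σ k, Fin (n k)) ℂ := by
    intro W
    rw [Matrix.mem_unitaryGroup_iff, star_bd, ← Matrix.blockDiagonal'_mul,
      ← Matrix.blockDiagonal'_one]
    exact congrArg _ (funext fun k => Matrix.mem_unitaryGroup_iff.mp (W k).2)
  have hcomm : ∀ (W : ∀ k, Matrix.unitaryGroup (Fin (n k)) ℂ),
      (⟨blockDiagonal' (fun k => (W k : Matrix (Fin (n k)) (Fin (n k)) ℂ)), memU W⟩ :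
        Matrix.unitaryGroup (Σ k, Fin (n k)) ℂ) ∈ thermodynamicGroup D := by
    intro W
    show blockDiagonal' (fun k => (W k : Matrix (Fin (n k)) (Fin (n k)) ℂ)) * D
      = D * blockDiagonal' (fun k => (W k : Matrix (Fin (n k)) (Fin (n k)) ℂ))
    rw [hD]
    exact bd_comm lam _
  let Φ : (∀ k, Matrix.unitaryGroup (Fin (n k)) ℂ) →* thermodynamicGroup D :=
    { toFun := fun W =>
        ⟨⟨blockDiagonal' (fun k => (W k : Matrix (Fin (n k)) (Fin (n k)) ℂ)), memU W⟩, hcomm W⟩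
      map_one' := by
        refine Subtype.ext (Subtype.ext ?_)
        show blockDiagonal'
            (fun k => ((1 : Matrix.unitaryGroup (Fin (n k)) ℂ) : Matrix (Fin (n k)) (Fin (n k)) ℂ))
          = (1 : Matrix (Σ k, Fin (n k)) (Σ k, Fin (n k)) ℂ)
        rw [← Matrix.blockDiagonal'_one]
        rfl
      map_mul' := fun W W' => by
        refine Subtype.ext (Subtype.ext ?_)
        show blockDiagonal'
            (fun k => ((W k * W' k : Matrix.unitaryGroup (Fin (n k)) ℂ) :
              Matrix (Fin (n k)) (Fin (n k)) ℂ))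
          = blockDiagonal' (fun k => (W k : Matrix (Fin (n k)) (Fin (n k)) ℂ))
            * blockDiagonal' (fun k => (W' k : Matrix (Fin (n k)) (Fin (n k)) ℂ))
        rw [← Matrix.blockDiagonal'_mul]
        rfl }
  have hinj : Function.Injective Φ := by
    intro W W' h
    have h1 : blockDiagonal' (fun k => (W k : Matrix (Fin (n k)) (Fin (n k)) ℂ))
        = blockDiagonal' (fun k => (W' k : Matrix (Fin (n k)) (Fin (n k)) ℂ)) :=
      congrArg Subtype.val (congrArg Subtype.val h)
    have h2 := Matrix.blockDiagonal'_injective h1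
    funext k
    exact Subtype.ext (congrFun h2 k)
  have hsurj : Function.Surjective Φ := by
    rintro ⟨⟨V, hV⟩, hVc⟩
    have hVc' : V * D = D * V := hVc
    rw [hD] at hVc'
    have h0 := block_zero lam hlam V hVc'
    have hVbd := eq_bd_of_block_zero V h0
    set B : ∀ k, Matrix (Fin (n k)) (Fin (n k)) ℂ :=
      fun k => Matrix.of (fun i j => V ⟨k, i⟩ ⟨k, j⟩) with hBdef
    have hBU : ∀ k, B k ∈ Matrix.unitaryGroup (Fin (n k)) ℂ := by
      intro k
      rw [Matrix.mem_unitaryGroup_iff']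
      have h1 : star V * V = 1 := Matrix.mem_unitaryGroup_iff'.mp hV
      rw [hVbd, star_bd, ← Matrix.blockDiagonal'_mul, ← Matrix.blockDiagonal'_one] at h1
      exact congrFun (Matrix.blockDiagonal'_injective h1) k
    refine ⟨fun k => ⟨B k, hBU k⟩, ?_⟩
    exact Subtype.ext (Subtype.ext hVbd.symm)
  exact ⟨(MulEquiv.ofBijective Φ ⟨hinj, hsurj⟩).symm⟩

/-- **Proposition 1.** For a Hamiltonian `H = u (⊕ₖ λₖ 1_{nₖ}) u†` with distinct
eigenvalues `λ k` of multiplicities `n k`, the thermodynamic group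
`{V ∈ U(ι) : V H = H V}` is isomorphic, as a group, to the direct product `∏ₖ U(n k)`. -/
theorem thermodynamicGroup_iso_prod_unitaryGroups (p : ℕ) (hp : 1 ≤ p)
    (n : Fin p → ℕ) (hn : ∀ k, 1 ≤ n k) (lam : Fin p → ℝ) (hlam : Function.Injective lam)
    (u : Matrix.unitaryGroup (Σ k, Fin (n k)) ℂ) :
    Nonempty
      (thermodynamicGroup
          ((u : Matrix (Σ k, Fin (n k)) (Σ k, Fin (n k)) ℂ) *
            Matrix.blockDiagonal'
              (fun k => (lam k : ℂ) • (1 : Matrix (Fin (n k)) (Fin (n k)) ℂ)) *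
            star (u : Matrix (Σ k, Fin (n k)) (Σ k, Fin (n k)) ℂ))
        ≃* (∀ k, Matrix.unitaryGroup (Fin (n k)) ℂ)) := by
  obtain ⟨e3⟩ := thermo_bd_iso lam hlam
  set D := Matrix.blockDiagonal'
    (fun k => (lam k : ℂ) • (1 : Matrix (Fin (n k)) (Fin (n k)) ℂ)) with hDdef
  have heq := thermo_conj_eq u D
  have e1 := MulEquiv.subgroupMap (MulAut.conj u) (thermodynamicGroup D)
  refine ⟨((MulEquiv.subgroupCongr ?_).trans e1.symm).trans e3⟩
  rw [← heq]
  rfl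
end

section
/- Let d ≥ 1 and let μ be the Haar probability measure on the compact topological group U(d) of unitary d×d complex matrices. Then for every matrix ρ ∈ M_d(ℂ), the Bochner integral ∫_{U(d)} U ρ U† dμ(U) equals (trace(ρ)/d) • 1_d. -/
open MeasureTheory Matrix

attribute [local instance] Matrix.normedAddCommGroup Matrix.normedSpace

noncomputable instance (d : ℕ) : MeasurableSpace (Matrix.unitaryGroup (Fin d) ℂ) := borel _
instance (d : ℕ) : BorelSpace (Matrix.unitaryGroup (Fin d) ℂ) := ⟨rfl⟩

instance (d : ℕ) : ContinuousMul (Matrix.unitaryGroup (Fin d) ℂ) where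
  continuous_mul := by
    apply Continuous.subtype_mk
    exact (continuous_subtype_val.comp continuous_fst).mul
      (continuous_subtype_val.comp continuous_snd)

instance (d : ℕ) : CompactSpace (Matrix.unitaryGroup (Fin d) ℂ) := by
  have h : IsCompact (Matrix.unitaryGroup (Fin d) ℂ : Set (Matrix (Fin d) (Fin d) ℂ)) := by
    apply Metric.isCompact_of_isClosed_isBounded
    · have : (Matrix.unitaryGroup (Fin d) ℂ : Set (Matrix (Fin d) (Fin d) ℂ))
          = {A | A * star A = 1} := by
        ext A; exact Matrix.mem_unitaryGroup_iff
      rw [this]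
      exact isClosed_eq (continuous_id.mul continuous_star :
        Continuous fun A : Matrix (Fin d) (Fin d) ℂ => A * star A) continuous_const
    · rw [isBounded_iff_forall_norm_le]
      exact ⟨1, fun A hA => entrywise_sup_norm_bound_of_unitary hA⟩
  exact isCompact_iff_compactSpace.mp h

noncomputable instance (d : ℕ) : ContinuousENorm (Matrix (Fin d) (Fin d) ℂ) where
  continuous_enorm := by
    exact @continuous_enorm _ _ SeminormedAddGroup.toContinuousENorm

private def permMat (d : ℕ) (σ : Equiv.Perm (Fin d)) : Matrix (Fin d) (Fin d) ℂ :=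
  Matrix.of fun a b => if b = σ a then 1 else 0

private lemma permMat_mem (d : ℕ) (σ : Equiv.Perm (Fin d)) :
    permMat d σ ∈ Matrix.unitaryGroup (Fin d) ℂ := by
  rw [Matrix.mem_unitaryGroup_iff]
  ext a b
  simp only [Matrix.mul_apply, Matrix.star_apply, permMat, Matrix.of_apply, apply_ite star, star_one,
    star_zero, ite_mul, one_mul, zero_mul]
  rw [Finset.sum_ite_eq' Finset.univ (σ a)]
  simp [Matrix.one_apply, σ.injective.eq_iff, eq_comm]

private lemma permMat_conj (d : ℕ) (σ : Equiv.Perm (Fin d)) (M : Matrix (Fin d) (Fin d) ℂ) :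
    permMat d σ * M * star (permMat d σ) = Matrix.of fun a b => M (σ a) (σ b) := by
  ext a b
  simp only [Matrix.mul_apply, Matrix.star_apply, permMat, Matrix.of_apply, apply_ite star, star_one,
    star_zero, ite_mul, one_mul, zero_mul, mul_ite, mul_one, mul_zero]
  simp [Finset.sum_ite_eq']

private lemma diag_conj (d : ℕ) (v : Fin d → ℂ) (M : Matrix (Fin d) (Fin d) ℂ) :
    Matrix.diagonal v * M * star (Matrix.diagonal v)
      = Matrix.of fun a b => v a * M a b * star (v b) := by
  ext a b
  simp [Matrix.star_eq_conjTranspose, Matrix.diagonal_conjTranspose, Matrix.diagonal_mul,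
    Matrix.mul_diagonal, Pi.star_apply, mul_comm, mul_assoc, mul_left_comm]

private lemma diag_mem (d : ℕ) (v : Fin d → ℂ) (hv : ∀ i, v i * star (v i) = 1) :
    Matrix.diagonal v ∈ Matrix.unitaryGroup (Fin d) ℂ := by
  rw [Matrix.mem_unitaryGroup_iff]
  rw [Matrix.star_eq_conjTranspose, Matrix.diagonal_conjTranspose, Matrix.diagonal_mul_diagonal]
  rw [show (fun i => v i * star v i) = fun _ => (1:ℂ) from funext fun i => hv i]
  simp [Matrix.diagonal_one]

/-- The full unitary twirl of any matrix with respect to the Haar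
probability measure on the compact group `U(d)` equals `(trace ρ / d) • 1`. -/
theorem haar_twirl_eq_smul_one (d : ℕ) (hd : 1 ≤ d)
    (μ : Measure (Matrix.unitaryGroup (Fin d) ℂ))
    [μ.IsHaarMeasure] [IsProbabilityMeasure μ]
    (ρ : Matrix (Fin d) (Fin d) ℂ) :
    (∫ U : Matrix.unitaryGroup (Fin d) ℂ,
        (U : Matrix (Fin d) (Fin d) ℂ) * ρ * star (U : Matrix (Fin d) (Fin d) ℂ) ∂μ)
      = (ρ.trace / (d : ℂ)) • (1 : Matrix (Fin d) (Fin d) ℂ) := by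
  have i0 : Fin d := ⟨0, hd⟩
  set f : (Matrix.unitaryGroup (Fin d) ℂ) → Matrix (Fin d) (Fin d) ℂ :=
    fun U => (U : Matrix (Fin d) (Fin d) ℂ) * ρ * star (U : Matrix (Fin d) (Fin d) ℂ) with hfdef
  have hcont : Continuous f :=
    (continuous_subtype_val.mul continuous_const).mul
      (continuous_star.comp continuous_subtype_val)
  have hint : Integrable f μ :=
    hcont.integrable_of_hasCompactSupport ((isClosed_tsupport f).isCompact)
  set M := ∫ U, f U ∂μ with hMdef
  have key : ∀ V : Matrix.unitaryGroup (Fin d) ℂ,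
      (V : Matrix (Fin d) (Fin d) ℂ) * M * star (V : Matrix (Fin d) (Fin d) ℂ) = M := by
    intro V
    let L : Matrix (Fin d) (Fin d) ℂ →L[ℂ] Matrix (Fin d) (Fin d) ℂ :=
      LinearMap.toContinuousLinearMap
        ((LinearMap.mulRight ℂ (star (V : Matrix (Fin d) (Fin d) ℂ))).comp
          (LinearMap.mulLeft ℂ (V : Matrix (Fin d) (Fin d) ℂ)))
    have hL : ∀ A, L A
        = (V : Matrix (Fin d) (Fin d) ℂ) * A * star (V : Matrix (Fin d) (Fin d) ℂ) :=
      fun A => rfl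
    calc (V : Matrix (Fin d) (Fin d) ℂ) * M * star (V : Matrix (Fin d) (Fin d) ℂ)
        = L M := (hL M).symm
      _ = ∫ U, L (f U) ∂μ := (L.integral_comp_comm hint).symm
      _ = ∫ U, f (V * U) ∂μ := by
          congr 1
          funext U
          simp only [hL, hfdef, Submonoid.coe_mul, StarMul.star_mul, mul_assoc]
      _ = M := integral_mul_left_eq_self f V
  have entry_eq : ∀ (σ : Equiv.Perm (Fin d)) (a b : Fin d), M (σ a) (σ b) = M a b := by
    intro σ a b
    have h := key ⟨permMat d σ, permMat_mem d σ⟩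
    rw [show ((⟨permMat d σ, permMat_mem d σ⟩ : Matrix.unitaryGroup (Fin d) ℂ) :
        Matrix (Fin d) (Fin d) ℂ) = permMat d σ from rfl, permMat_conj] at h
    calc M (σ a) (σ b) = (Matrix.of fun a b => M (σ a) (σ b)) a b := rfl
      _ = M a b := by rw [h]
  have offdiag : ∀ a b : Fin d, a ≠ b → M a b = 0 := by
    intro a b hab
    set v : Fin d → ℂ := fun i => if i = a then -1 else 1 with hv
    have hvmem : Matrix.diagonal v ∈ Matrix.unitaryGroup (Fin d) ℂ := by
      apply diag_mem
      intro i
      by_cases h : i = a <;> simp [hv, h]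
    have h := key ⟨Matrix.diagonal v, hvmem⟩
    rw [show ((⟨Matrix.diagonal v, hvmem⟩ : Matrix.unitaryGroup (Fin d) ℂ) :
        Matrix (Fin d) (Fin d) ℂ) = Matrix.diagonal v from rfl, diag_conj] at h
    have h2 : v a * M a b * star (v b) = M a b := by
      calc v a * M a b * star (v b) = (Matrix.of fun a b => v a * M a b * star (v b)) a b := rfl
        _ = M a b := by rw [h]
    simp only [hv, if_pos rfl, if_neg (Ne.symm hab), star_one, mul_one, neg_mul, one_mul,
      neg_one_mul] at h2
    have h3 : M a b + M a b = 0 := by linear_combination -h2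
    exact add_self_eq_zero.mp h3
  have diag_eq : ∀ a : Fin d, M a a = M i0 i0 := by
    intro a
    have h := entry_eq (Equiv.swap a i0) i0 i0
    simpa [Equiv.swap_apply_right] using h
  let T : Matrix (Fin d) (Fin d) ℂ →L[ℂ] ℂ :=
    LinearMap.toContinuousLinearMap (Matrix.traceLinearMap (Fin d) ℂ ℂ)
  have htr : M.trace = ρ.trace := by
    have h1 : T M = ∫ U, T (f U) ∂μ := (T.integral_comp_comm hint).symm
    have h2 : ∀ U : Matrix.unitaryGroup (Fin d) ℂ, T (f U) = ρ.trace := by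
      intro U
      show Matrix.trace ((U : Matrix (Fin d) (Fin d) ℂ) * ρ
        * star (U : Matrix (Fin d) (Fin d) ℂ)) = ρ.trace
      rw [Matrix.trace_mul_cycle, Matrix.mem_unitaryGroup_iff'.mp U.2, one_mul]
    rw [show M.trace = T M from rfl, h1]
    simp [h2]
  have hsum : M.trace = (d : ℂ) * M i0 i0 := by
    rw [Matrix.trace]
    simp [Matrix.diag, diag_eq, Finset.sum_const, mul_comm]
  have hdne : (d : ℂ) ≠ 0 := by
    exact_mod_cast Nat.cast_ne_zero.mpr (by omega)
  have hc : M i0 i0 = ρ.trace / (d : ℂ) := by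
    rw [eq_div_iff hdne]
    rw [← htr, hsum]
    ring
  ext a b
  by_cases h : a = b
  · subst h
    simp [Matrix.smul_apply, Matrix.one_apply_eq, diag_eq a, hc]
  · simp [Matrix.smul_apply, Matrix.one_apply_ne h, offdiag a b h]
end

section
/- Fix m ≥ 1 and block sizes n : Fin m → ℕ with n k ≥ 1, let ι := Σ k, Fin (n k), and let p : ι → ℝ satisfy p x ≥ 0 for all x. Define q : ι → ℝ by q⟨k,i⟩ := (∑_{j : Fin (n k)} p⟨k,j⟩) / (n k). Then ∑_{x : ι} negMulLog(q x) = ∑_{x : ι} negMulLog(p x) if and only if for every k and all i, j : Fin (n k) one has p⟨k,i⟩ = p⟨k,j⟩; that is, equality of the block-averaged entropy with the original entropy holds exactly when p is constant on each block. -/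
lemma block_entropy_eq_iff (N : ℕ) (hN : 1 ≤ N) (f : Fin N → ℝ) (hf : ∀ i, 0 ≤ f i) :
    (∑ _i : Fin N, Real.negMulLog ((∑ j, f j) / (N : ℝ))) = (∑ i, Real.negMulLog (f i))
      ↔ ∀ i j, f i = f j := by
  have hN0 : (0 : ℝ) < N := by exact_mod_cast hN
  have h₀ : ∀ i ∈ (Finset.univ : Finset (Fin N)), (0 : ℝ) < (N : ℝ)⁻¹ := fun i _ => by positivity
  have h₁ : ∑ _i : Fin N, (N : ℝ)⁻¹ = 1 := by
    simp [Finset.sum_const, Finset.card_univ]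
    field_simp
  have hmem : ∀ i ∈ (Finset.univ : Finset (Fin N)), f i ∈ Set.Ici (0 : ℝ) := fun i _ => hf i
  have key := Real.strictConcaveOn_negMulLog.map_sum_eq_iff h₀ h₁ hmem
  have havg : ∑ i : Fin N, (N : ℝ)⁻¹ • f i = (∑ j, f j) / (N : ℝ) := by
    simp [smul_eq_mul, ← Finset.mul_sum, div_eq_inv_mul]
  rw [havg] at key
  constructor
  · intro h
    have h' : Real.negMulLog ((∑ j, f j) / (N : ℝ))
        = ∑ i : Fin N, (N : ℝ)⁻¹ • Real.negMulLog (f i) := by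
      have hL : (∑ _i : Fin N, Real.negMulLog ((∑ j, f j) / (N : ℝ)))
          = (N : ℝ) * Real.negMulLog ((∑ j, f j) / (N : ℝ)) := by
        simp [Finset.sum_const, Finset.card_univ]
      rw [hL] at h
      simp only [smul_eq_mul, ← Finset.mul_sum]
      field_simp
      linarith
    have := key.mp h'
    intro i j
    rw [this i (Finset.mem_univ i), this j (Finset.mem_univ j)]
  · intro h
    have : ∀ i : Fin N, f i = (∑ j, f j) / (N : ℝ) := by
      intro i
      have : (∑ j, f j) = (N : ℝ) * f i := by
        rw [Finset.sum_congr rfl (fun j _ => h j i)]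
        simp [Finset.sum_const, Finset.card_univ, mul_comm]
      rw [this]
      field_simp
    apply Finset.sum_congr rfl
    intro i _
    rw [this i]

/-- **saturation of S_{𝒢_T} ≥ S_d.** The Shannon entropy `∑ negMulLog` of the
block-averaged vector equals that of the original nonnegative vector if and only if the vector
is constant on each block. -/
theorem blockAverage_entropy_eq_iff (m : ℕ) (hm : 1 ≤ m) (n : Fin m → ℕ) (hn : ∀ k, 1 ≤ n k)
    (p : (Σ k, Fin (n k)) → ℝ) (hp : ∀ x, 0 ≤ p x) :
    (∑ x : Σ k, Fin (n k),
        Real.negMulLog ((∑ j : Fin (n x.1), p ⟨x.1, j⟩) / (n x.1 : ℝ)))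
      = (∑ x : Σ k, Fin (n k), Real.negMulLog (p x))
      ↔ ∀ (k : Fin m) (i j : Fin (n k)), p ⟨k, i⟩ = p ⟨k, j⟩ := by
  rw [← Finset.univ_sigma_univ, Finset.sum_sigma, Finset.sum_sigma]
  have hle : ∀ k ∈ (Finset.univ : Finset (Fin m)),
      (∑ i : Fin (n k), Real.negMulLog (p ⟨k, i⟩))
        ≤ ∑ _i : Fin (n k), Real.negMulLog ((∑ j : Fin (n k), p ⟨k, j⟩) / (n k : ℝ)) := by
    intro k _
    have hN0 : (0 : ℝ) < (n k : ℝ) := by exact_mod_cast hn k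
    have h₀ : ∀ i ∈ (Finset.univ : Finset (Fin (n k))), (0 : ℝ) < ((n k : ℝ))⁻¹ :=
      fun i _ => by positivity
    have h₁ : ∑ _i : Fin (n k), ((n k : ℝ))⁻¹ = 1 := by
      simp [Finset.sum_const, Finset.card_univ]; field_simp
    have hmem : ∀ i ∈ (Finset.univ : Finset (Fin (n k))), p ⟨k, i⟩ ∈ Set.Ici (0 : ℝ) :=
      fun i _ => hp _
    have key := Real.strictConcaveOn_negMulLog.concaveOn.le_map_sum (fun i _ => (h₀ i (Finset.mem_univ i)).le)
      h₁ hmem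
    have havg : ∑ i : Fin (n k), ((n k : ℝ))⁻¹ • p ⟨k, i⟩ = (∑ j : Fin (n k), p ⟨k, j⟩) / (n k : ℝ) := by
      simp [smul_eq_mul, ← Finset.mul_sum, div_eq_inv_mul]
    rw [havg] at key
    calc (∑ i : Fin (n k), Real.negMulLog (p ⟨k, i⟩))
        = (n k : ℝ) * ∑ i : Fin (n k), ((n k : ℝ))⁻¹ • Real.negMulLog (p ⟨k, i⟩) := by
          simp only [smul_eq_mul, ← Finset.mul_sum]; field_simp
      _ ≤ (n k : ℝ) * Real.negMulLog ((∑ j : Fin (n k), p ⟨k, j⟩) / (n k : ℝ)) := by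
          exact mul_le_mul_of_nonneg_left key hN0.le
      _ = ∑ _i : Fin (n k), Real.negMulLog ((∑ j : Fin (n k), p ⟨k, j⟩) / (n k : ℝ)) := by
          simp [Finset.sum_const, Finset.card_univ]
  simp only
  rw [eq_comm, Finset.sum_eq_sum_iff_of_le hle]
  constructor
  · intro h k
    exact (block_entropy_eq_iff (n k) (hn k) (fun i => p ⟨k, i⟩) (fun i => hp _)).mp
      ((h k (Finset.mem_univ k)).symm)
  · intro h k _
    exact ((block_entropy_eq_iff (n k) (hn k) (fun i => p ⟨k, i⟩) (fun i => hp _)).mpr (h k)).symm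
end

section
/- Let a, δ, γ₀, ε be real numbers with ε ≠ 0. Set s := √(γ₀² + ε²), λ := √((aδ + γ₀)² + ε²), φ := λ + aδ + γ₀, and N := √(φ² + ε²). Define the real 2×2 matrices H₀ := !![γ₀, ε; ε, −γ₀], H₁ := !![γ₀ + aδ, ε; ε, −(γ₀ + aδ)], ρ := (1/(2s)) • !![s − γ₀, −ε; −ε, s + γ₀], and u := (1/N) • !![−ε, φ; φ, ε]. Let ρᴱ := uᵀ · ρ · u and let ρ_diag be the diagonal matrix with the same diagonal entries as ρᴱ. Then (1/2) · trace( ρ_diag · (uᵀ·H₁·u − uᵀ·H₀·u) ) = − a δ (aδ + γ₀) (aδγ₀ + γ₀² + ε²) / ( 2 s ((aδ + γ₀)² + ε²) ). -/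
open Matrix

set_option maxHeartbeats 40000000 in
/-- **Eq. (28), invariant work for the Landau–Zener quench.** With `ρᴱ = uᵀρu`
the ground-state projector of `H₀` expressed in the eigenbasis of the post-quench Hamiltonian
`H₁` and `ρ_diag` its diagonal part, the invariant work
`(1/2)·Tr{ρ_diag (uᵀH₁u − uᵀH₀u)}` equals
`− aδ(aδ + γ₀)(aδγ₀ + γ₀² + ε²) / (2 s ((aδ + γ₀)² + ε²))`. -/
theorem landauZener_invariant_work (a δ γ₀ ε : ℝ) (hε : ε ≠ 0) :
    let s : ℝ := Real.sqrt (γ₀ ^ 2 + ε ^ 2)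
    let lam : ℝ := Real.sqrt ((a * δ + γ₀) ^ 2 + ε ^ 2)
    let φ : ℝ := lam + a * δ + γ₀
    let N : ℝ := Real.sqrt (φ ^ 2 + ε ^ 2)
    let H₀ : Matrix (Fin 2) (Fin 2) ℝ := !![γ₀, ε; ε, -γ₀]
    let H₁ : Matrix (Fin 2) (Fin 2) ℝ := !![γ₀ + a * δ, ε; ε, -(γ₀ + a * δ)]
    let ρ : Matrix (Fin 2) (Fin 2) ℝ := (1 / (2 * s)) • !![s - γ₀, -ε; -ε, s + γ₀]
    let u : Matrix (Fin 2) (Fin 2) ℝ := (1 / N) • !![-ε, φ; φ, ε]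
    let ρE : Matrix (Fin 2) (Fin 2) ℝ := uᵀ * ρ * u
    let ρdiag : Matrix (Fin 2) (Fin 2) ℝ := Matrix.diagonal (fun i => ρE i i)
    (1 / 2) * Matrix.trace (ρdiag * (uᵀ * H₁ * u - uᵀ * H₀ * u))
      = -(a * δ * (a * δ + γ₀) * (a * δ * γ₀ + γ₀ ^ 2 + ε ^ 2)) /
          (2 * s * ((a * δ + γ₀) ^ 2 + ε ^ 2)) := by
  intro s lam φ N H₀ H₁ ρ u ρE ρdiag
  have hs : 0 < s := Real.sqrt_pos.2 (by positivity)
  have hlam : 0 < lam := Real.sqrt_pos.2 (by positivity)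
  have hs2 : s ^ 2 = γ₀ ^ 2 + ε ^ 2 := Real.sq_sqrt (by positivity)
  have hlam2 : lam ^ 2 = (a * δ + γ₀) ^ 2 + ε ^ 2 := Real.sq_sqrt (by positivity)
  have hφ : 0 < φ := by
    have : |a * δ + γ₀| < lam := by
      rw [← Real.sqrt_sq_eq_abs]
      have h2 : 0 < ε ^ 2 := by positivity
      exact Real.sqrt_lt_sqrt (sq_nonneg _) (by linarith)
    have := abs_lt.1 this
    simp only [φ]; linarith [this.1]
  have hN2 : N ^ 2 = φ ^ 2 + ε ^ 2 := Real.sq_sqrt (by positivity)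
  have hN : 0 < N := Real.sqrt_pos.2 (by positivity)
  have hden : (a * δ + γ₀) ^ 2 + ε ^ 2 ≠ 0 := by positivity
  have hNne : N ≠ 0 := ne_of_gt hN
  have hsne : s ≠ 0 := ne_of_gt hs
  have key : (1 / 2 : ℝ) * Matrix.trace (ρdiag * (uᵀ * H₁ * u - uᵀ * H₀ * u))
      = (-(a * δ) * (φ ^ 2 - ε ^ 2) *
          (γ₀ * (φ ^ 2 - ε ^ 2) + 2 * ε ^ 2 * φ)) / (2 * s * N ^ 4) := by
    simp only [ρdiag, ρE, u, ρ, H₀, H₁, Matrix.trace, Matrix.diag, Matrix.mul_apply,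
      Fin.sum_univ_two, Matrix.transpose_apply, Matrix.smul_apply, Matrix.cons_val',
      Matrix.cons_val_zero, Matrix.cons_val_one, Matrix.head_cons, Matrix.head_fin_const,
      Matrix.empty_val', Matrix.cons_val_fin_one, Matrix.diagonal, Matrix.sub_apply,
      Matrix.of_apply, smul_eq_mul, if_true, reduceIte, zero_ne_one, one_ne_zero, if_false]
    field_simp
    ring
  have hφdef : φ = lam + a * δ + γ₀ := rfl
  clear_value s lam φ N
  rw [key, div_eq_div_iff (by positivity) (by positivity)]
  subst hφdef
  linear_combination ((2:ℝ)*s*a*δ*γ₀*ε^4 + (4:ℝ)*s*a*δ*γ₀^3*ε^2 + (2:ℝ)*s*a*δ*γ₀^5 + (2:ℝ)*s*a^2*δ^2*ε^4 + (10:ℝ)*s*a^2*δ^2*γ₀^2*ε^2 + (8:ℝ)*s*a^2*δ^2*γ₀^4 + (8:ℝ)*s*a^3*δ^3*γ₀*ε^2 + (12:ℝ)*s*a^3*δ^3*γ₀^3 + (2:ℝ)*s*a^4*δ^4*ε^2 + (8:ℝ)*s*a^4*δ^4*γ₀^2 + (2:ℝ)*s*a^5*δ^5*γ₀ + (4:ℝ)*lam*s*a*δ*γ₀^2*ε^2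 + (4:ℝ)*lam*s*a*δ*γ₀^4 + (8:ℝ)*lam*s*a^2*δ^2*γ₀*ε^2 + (12:ℝ)*lam*s*a^2*δ^2*γ₀^3 + (4:ℝ)*lam*s*a^3*δ^3*ε^2 + (12:ℝ)*lam*s*a^3*δ^3*γ₀^2 + (4:ℝ)*lam*s*a^4*δ^4*γ₀ + (2:ℝ)*lam^2*s*a*δ*γ₀*ε^2 + (2:ℝ)*lam^2*s*a*δ*γ₀^3 + (2:ℝ)*lam^2*s*a^2*δ^2*ε^2 + (4:ℝ)*lam^2*s*a^2*δ^2*γ₀^2 + (2:ℝ)*lam^2*s*a^3*δ^3*γ₀ + (2:ℝ)*N^2*s*a*δ*γ₀*ε^2 + (2:ℝ)*N^2*s*a*δ*γ₀^3 + (2:ℝ)*N^2*s*a^2*δ^2*ε^2 + (4:ℝ)*N^2*s*a^2*δ^2*γ₀^2 + (2:ℝ)*N^2*s*a^3*δ^3*γ₀) * hN2 + ((-4:ℝ)*s*a*δ*γ₀*ε^4 + (-4:ℝ)*s*a*δ*γ₀^3*ε^2 + (-6:ℝ)*s*a^2*δ^2*ε^4 + (-6:ℝ)*s*a^2*δ^2*γ₀^2*ε^2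 + (2:ℝ)*s*a^4*δ^4*ε^2 + (-4:ℝ)*lam*s*a*δ*ε^4 + (-4:ℝ)*lam*s*a*δ*γ₀^2*ε^2 + (4:ℝ)*lam*s*a^3*δ^3*ε^2 + (2:ℝ)*lam^2*s*a^2*δ^2*ε^2) * hlam2
end

section
/- Let a, δ, γ₀, ε be real numbers with ε ≠ 0. Set s := √(γ₀² + ε²), λ := √((aδ + γ₀)² + ε²), φ := λ + aδ + γ₀, and N := √(φ² + ε²). Define the real 2×2 matrices H₀ := !![γ₀, ε; ε, −γ₀], ρ := (1/(2s)) • !![s − γ₀, −ε; −ε, s + γ₀], and u := (1/N) • !![−ε, φ; φ, ε]. Let ρᴱ := uᵀ · ρ · u, let ρ_diag be the diagonal matrix with the same diagonal entries as ρᴱ, and let ρ_c := ρᴱ − ρ_diag be its off-diagonal part. Then −(1/2) · trace( ρ_c · (uᵀ·H₀·u) ) = a² δ² ε² / ( 2 s ((aδ + γ₀)² + ε²) ). -/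
open Matrix

set_option maxHeartbeats 1000000 in
/-- **Eq. (29), coherent heat for the Landau–Zener quench.** With `ρᴱ = uᵀρu`
the ground-state projector of `H₀` expressed in the eigenbasis of the post-quench Hamiltonian
and `ρ_c = ρᴱ − ρ_diag` its off-diagonal (coherence) part, the coherent heat
`−(1/2)·Tr{ρ_c (uᵀH₀u)}` equals `a²δ²ε² / (2 s ((aδ + γ₀)² + ε²))`. -/
theorem landauZener_coherent_heat (a δ γ₀ ε : ℝ) (hε : ε ≠ 0) :
    let s : ℝ := Real.sqrt (γ₀ ^ 2 + ε ^ 2)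
    let lam : ℝ := Real.sqrt ((a * δ + γ₀) ^ 2 + ε ^ 2)
    let φ : ℝ := lam + a * δ + γ₀
    let N : ℝ := Real.sqrt (φ ^ 2 + ε ^ 2)
    let H₀ : Matrix (Fin 2) (Fin 2) ℝ := !![γ₀, ε; ε, -γ₀]
    let ρ : Matrix (Fin 2) (Fin 2) ℝ := (1 / (2 * s)) • !![s - γ₀, -ε; -ε, s + γ₀]
    let u : Matrix (Fin 2) (Fin 2) ℝ := (1 / N) • !![-ε, φ; φ, ε]
    let ρE : Matrix (Fin 2) (Fin 2) ℝ := uᵀ * ρ * u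
    let ρdiag : Matrix (Fin 2) (Fin 2) ℝ := Matrix.diagonal (fun i => ρE i i)
    let ρc : Matrix (Fin 2) (Fin 2) ℝ := ρE - ρdiag;
    -(1 / 2) * Matrix.trace (ρc * (uᵀ * H₀ * u))
      = a ^ 2 * δ ^ 2 * ε ^ 2 / (2 * s * ((a * δ + γ₀) ^ 2 + ε ^ 2)) := by
  intro s lam φ N H₀ ρ u ρE ρdiag ρc
  have hs : 0 < s := Real.sqrt_pos.mpr (by positivity)
  have hs2 : s ^ 2 = γ₀ ^ 2 + ε ^ 2 := Real.sq_sqrt (by positivity)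
  have hlam : 0 < lam := Real.sqrt_pos.mpr (by positivity)
  have hlam2 : lam ^ 2 = (a * δ + γ₀) ^ 2 + ε ^ 2 := Real.sq_sqrt (by positivity)
  have hφ : 0 < φ := by
    have h1 : |a * δ + γ₀| < lam := by
      rw [← Real.sqrt_sq_eq_abs]
      exact Real.sqrt_lt_sqrt (by positivity) (lt_add_of_pos_right _ (by positivity))
    have := abs_le.mp h1.le
    show 0 < lam + a * δ + γ₀
    nlinarith [neg_abs_le (a * δ + γ₀)]
  have hN : 0 < N := Real.sqrt_pos.mpr (by positivity)
  have hN2 : N ^ 2 = φ ^ 2 + ε ^ 2 := Real.sq_sqrt (by positivity)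
  have hN2' : N ^ 2 = 2 * lam * φ := by
    rw [hN2]; show φ ^ 2 + ε ^ 2 = 2 * lam * φ
    have hφdef : φ = lam + a * δ + γ₀ := rfl
    nlinarith [hlam2]
  have hφ2 : φ ^ 2 - 2 * γ₀ * φ - ε ^ 2 = 2 * (a * δ) * φ := by
    have hφdef : φ = lam + a * δ + γ₀ := rfl
    nlinarith [hlam2]
  set M : Matrix (Fin 2) (Fin 2) ℝ := uᵀ * H₀ * u with hM
  have hM01 : M 0 1 = ε * (φ ^ 2 - 2 * γ₀ * φ - ε ^ 2) / N ^ 2 := by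
    simp only [hM, H₀, u, Matrix.mul_apply, Fin.sum_univ_two, Matrix.transpose_apply,
      Matrix.smul_apply, Matrix.of_apply, Matrix.cons_val', Matrix.cons_val_zero, Matrix.cons_val_one,
      Matrix.head_cons, Matrix.empty_val', Matrix.cons_val_fin_one, Matrix.head_fin_const,
      smul_eq_mul]
    field_simp
    ring
  have hM10 : M 1 0 = ε * (φ ^ 2 - 2 * γ₀ * φ - ε ^ 2) / N ^ 2 := by
    simp only [hM, H₀, u, Matrix.mul_apply, Fin.sum_univ_two, Matrix.transpose_apply,
      Matrix.smul_apply, Matrix.of_apply, Matrix.cons_val', Matrix.cons_val_zero, Matrix.cons_val_one,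
      Matrix.head_cons, Matrix.empty_val', Matrix.cons_val_fin_one, Matrix.head_fin_const,
      smul_eq_mul]
    field_simp
    ring
  have hE01 : ρE 0 1 = -(ε * (φ ^ 2 - 2 * γ₀ * φ - ε ^ 2)) / (2 * s * N ^ 2) := by
    simp only [ρE, ρ, u, Matrix.mul_apply, Fin.sum_univ_two, Matrix.transpose_apply,
      Matrix.smul_apply, Matrix.of_apply, Matrix.cons_val', Matrix.cons_val_zero, Matrix.cons_val_one,
      Matrix.head_cons, Matrix.empty_val', Matrix.cons_val_fin_one, Matrix.head_fin_const,
      smul_eq_mul]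
    field_simp
    ring
  have hE10 : ρE 1 0 = -(ε * (φ ^ 2 - 2 * γ₀ * φ - ε ^ 2)) / (2 * s * N ^ 2) := by
    simp only [ρE, ρ, u, Matrix.mul_apply, Fin.sum_univ_two, Matrix.transpose_apply,
      Matrix.smul_apply, Matrix.of_apply, Matrix.cons_val', Matrix.cons_val_zero, Matrix.cons_val_one,
      Matrix.head_cons, Matrix.empty_val', Matrix.cons_val_fin_one, Matrix.head_fin_const,
      smul_eq_mul]
    field_simp
    ring
  have htr : Matrix.trace (ρc * M) = ρE 0 1 * M 1 0 + ρE 1 0 * M 0 1 := by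
    have hc00 : ρc 0 0 = 0 := by
      simp [ρc, ρdiag, Matrix.sub_apply, Matrix.diagonal_apply_eq]
    have hc11 : ρc 1 1 = 0 := by
      simp [ρc, ρdiag, Matrix.sub_apply, Matrix.diagonal_apply_eq]
    have hc01 : ρc 0 1 = ρE 0 1 := by
      simp [ρc, ρdiag, Matrix.sub_apply, Matrix.diagonal_apply_ne]
    have hc10 : ρc 1 0 = ρE 1 0 := by
      simp [ρc, ρdiag, Matrix.sub_apply, Matrix.diagonal_apply_ne]
    rw [Matrix.trace_fin_two, Matrix.mul_apply, Matrix.mul_apply, Fin.sum_univ_two,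
      Fin.sum_univ_two, hc00, hc11, hc01, hc10]
    ring
  rw [htr, hE01, hE10, hM01, hM10, hφ2, ← hlam2, hN2']
  field_simp
  ring
end
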